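/- Under the continuous-time consensus dynamics with symmetric time-varying coupling weights that are uniformly bounded above and below by positive constants on every edge, every node's state converges as t → ∞ to the average of the initial states: lim_{t→∞} x_i(t) = (1/n) Σ_{j=1}^n x_j(0) for every node i. -/

import Mathlib

open Filter Topology

section Aux

variable {n : ℕ} (G : SimpleGraph (Fin n)) [DecidableRel G.Adj]

lemma sum_nbr_swap (f : Fin n → Fin n → ℝ) :
    ∑ i, ∑ j ∈ G.neighborFinset i, f i j = ∑ i, ∑ j ∈ G.neighborFinset i, f j i := by
  have h : ∀ (g : Fin n → Fin n → ℝ), (∑ i, ∑ j ∈ G.neighborFinset i, g i j)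
      = ∑ i, ∑ j, if G.Adj i j then g i j else 0 := by
    intro g
    refine Finset.sum_congr rfl fun i _ => ?_
    rw [SimpleGraph.neighborFinset_eq_filter, Finset.sum_filter]
  rw [h f, h (fun i j => f j i), Finset.sum_comm]
  refine Finset.sum_congr rfl fun i _ => Finset.sum_congr rfl fun j _ => ?_
  by_cases hij : G.Adj i j
  · rw [if_pos hij, if_pos (hij.symm)]
  · rw [if_neg hij, if_neg (fun h' => hij h'.symm)]

lemma edge_sq_le (y : Fin n → ℝ) {u v : Fin n} (h : G.Adj u v) :
    (y v - y u) ^ 2 ≤ ∑ i, ∑ j ∈ G.neighborFinset i, (y j - y i) ^ 2 := by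
  have h1 : (y v - y u) ^ 2 ≤ ∑ j ∈ G.neighborFinset u, (y j - y u) ^ 2 :=
    Finset.single_le_sum (f := fun j => (y j - y u) ^ 2) (fun j _ => sq_nonneg _)
      ((SimpleGraph.mem_neighborFinset G u v).2 h)
  exact h1.trans (Finset.single_le_sum
    (f := fun i => ∑ j ∈ G.neighborFinset i, (y j - y i) ^ 2)
    (fun i _ => Finset.sum_nonneg fun j _ => sq_nonneg _) (Finset.mem_univ u))

lemma walk_bound (y : Fin n → ℝ) {u v : Fin n} (p : G.Walk u v) :
    |y u - y v| ≤ p.length * Real.sqrt (∑ i, ∑ j ∈ G.neighborFinset i, (y j - y i) ^ 2) := by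
  set E := ∑ i, ∑ j ∈ G.neighborFinset i, (y j - y i) ^ 2 with hE
  induction p with
  | nil => simp
  | @cons u w v h q ih =>
    have hew : |y u - y w| ≤ Real.sqrt E := by
      have h2 : (y u - y w) ^ 2 ≤ E := by
        have := edge_sq_le G y h.symm
        simpa using this
      calc |y u - y w| = Real.sqrt ((y u - y w) ^ 2) := (Real.sqrt_sq_eq_abs _).symm
        _ ≤ Real.sqrt E := Real.sqrt_le_sqrt h2
    calc |y u - y v| ≤ |y u - y w| + |y w - y v| := abs_sub_le _ _ _
      _ ≤ Real.sqrt E + q.length * Real.sqrt E := add_le_add hew ih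
      _ = (q.length + 1) * Real.sqrt E := by ring
      _ = ((q.cons h).length : ℝ) * Real.sqrt E := by
          rw [SimpleGraph.Walk.length_cons]; push_cast; ring

lemma poincare (hn : 2 ≤ n) (hconn : G.Connected) (y : Fin n → ℝ) :
    ∑ i, (y i - (∑ j, y j) / n) ^ 2
      ≤ n * ((n : ℝ) - 1) ^ 2 * ∑ i, ∑ j ∈ G.neighborFinset i, (y j - y i) ^ 2 := by
  set E := ∑ i, ∑ j ∈ G.neighborFinset i, (y j - y i) ^ 2 with hEdef
  have hE : 0 ≤ E := Finset.sum_nonneg fun i _ => Finset.sum_nonneg fun j _ => sq_nonneg _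
  have hn1 : (1 : ℝ) ≤ (n : ℝ) - 1 := by
    have : (2 : ℝ) ≤ (n : ℝ) := by exact_mod_cast hn
    linarith
  have hpair : ∀ i j : Fin n, (y i - y j) ^ 2 ≤ ((n : ℝ) - 1) ^ 2 * E := by
    intro i j
    obtain ⟨w⟩ := hconn.preconnected i j
    set p := w.toPath with hp
    have hlen : (p.1.length : ℝ) ≤ (n : ℝ) - 1 := by
      have := p.2.length_lt
      have h1 : p.1.length + 1 ≤ Fintype.card (Fin n) := this
      rw [Fintype.card_fin] at h1
      have : (p.1.length : ℝ) + 1 ≤ (n : ℝ) := by exact_mod_cast h1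
      linarith
    have habs : |y i - y j| ≤ ((n : ℝ) - 1) * Real.sqrt E := by
      refine (walk_bound G y p.1).trans ?_
      exact mul_le_mul_of_nonneg_right hlen (Real.sqrt_nonneg _)
    calc (y i - y j) ^ 2 = |y i - y j| ^ 2 := (sq_abs _).symm
      _ ≤ (((n : ℝ) - 1) * Real.sqrt E) ^ 2 := by
          exact pow_le_pow_left₀ (abs_nonneg _) habs 2
      _ = ((n : ℝ) - 1) ^ 2 * E := by
          rw [mul_pow, Real.sq_sqrt hE]
  have hnpos : (0 : ℝ) < n := by positivity
  have hone : ∀ i : Fin n, (y i - (∑ j, y j) / n) ^ 2 ≤ ((n : ℝ) - 1) ^ 2 * E := by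
    intro i
    have hrep : y i - (∑ j, y j) / n = (∑ j, (y i - y j)) / n := by
      rw [Finset.sum_sub_distrib, Finset.sum_const, Finset.card_univ, Fintype.card_fin]
      field_simp
      ring
    have hcs : (∑ j, (y i - y j)) ^ 2 ≤ (n : ℝ) * ∑ j, (y i - y j) ^ 2 := by
      have := sq_sum_le_card_mul_sum_sq (s := (Finset.univ : Finset (Fin n)))
        (f := fun j => y i - y j)
      simpa [Finset.card_univ] using this
    have hsum : (∑ j, (y i - y j) ^ 2) ≤ (n : ℝ) * (((n : ℝ) - 1) ^ 2 * E) := by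
      calc (∑ j, (y i - y j) ^ 2) ≤ ∑ _j : Fin n, ((n : ℝ) - 1) ^ 2 * E :=
            Finset.sum_le_sum fun j _ => hpair i j
        _ = (n : ℝ) * (((n : ℝ) - 1) ^ 2 * E) := by
            rw [Finset.sum_const, Finset.card_univ, Fintype.card_fin, nsmul_eq_mul]
    rw [hrep, div_pow]
    rw [div_le_iff₀ (by positivity)]
    calc (∑ j, (y i - y j)) ^ 2 ≤ (n : ℝ) * ∑ j, (y i - y j) ^ 2 := hcs
      _ ≤ (n : ℝ) * ((n : ℝ) * (((n : ℝ) - 1) ^ 2 * E)) :=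
          mul_le_mul_of_nonneg_left hsum (le_of_lt hnpos)
      _ = ((n : ℝ) - 1) ^ 2 * E * (n : ℝ) ^ 2 := by ring
  calc ∑ i, (y i - (∑ j, y j) / n) ^ 2 ≤ ∑ _i : Fin n, ((n : ℝ) - 1) ^ 2 * E :=
        Finset.sum_le_sum fun i _ => hone i
    _ = (n : ℝ) * (((n : ℝ) - 1) ^ 2 * E) := by
        rw [Finset.sum_const, Finset.card_univ, Fintype.card_fin, nsmul_eq_mul]
    _ = n * ((n : ℝ) - 1) ^ 2 * E := by ring

end Aux

/-- Continuous-time average consensus with symmetric, uniformly bounded,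
time-varying coupling weights: every node's state converges to the average
of the initial states. -/
theorem ct_average_consensus
    (n : ℕ) (hn : 2 ≤ n)
    (G : SimpleGraph (Fin n)) [DecidableRel G.Adj]
    (hconn : G.Connected)
    (x : ℝ → Fin n → ℝ)
    (a : Fin n → Fin n → ℝ → ℝ)
    (ha_cont : ∀ i j, Continuous (a i j))
    (ha_symm : ∀ i j t, a i j t = a j i t)
    (δ abar : ℝ) (hδ : 0 < δ) (hδa : δ ≤ abar)
    (hbound : ∀ i j, G.Adj i j → ∀ t : ℝ, 0 ≤ t →
      δ ≤ a i j t ∧ a i j t ≤ abar)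
    (hdyn : ∀ i, ∀ t : ℝ, 0 ≤ t →
      HasDerivAt (fun s => x s i)
        (∑ j ∈ G.neighborFinset i, a i j t * (x t j - x t i)) t) :
    ∀ i, Tendsto (fun t => x t i) atTop
      (𝓝 ((1 / (n : ℝ)) * ∑ j, x 0 j)) := by
  have hn2 : (2 : ℝ) ≤ (n : ℝ) := by exact_mod_cast hn
  have hnpos : (0 : ℝ) < (n : ℝ) := by linarith
  have hn1 : (1 : ℝ) ≤ (n : ℝ) - 1 := by linarith
  set m : ℝ := (1 / (n : ℝ)) * ∑ j, x 0 j with hm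
  set C : ℝ := (n : ℝ) * ((n : ℝ) - 1) ^ 2 with hC
  have hCpos : 0 < C := by rw [hC]; nlinarith
  set K : ℝ := -(δ / C) with hK
  have hKneg : K < 0 := by
    rw [hK, neg_lt, neg_zero]
    positivity
  -- the total sum is invariant
  have hzero : ∀ t : ℝ,
      (∑ i, ∑ j ∈ G.neighborFinset i, a i j t * (x t j - x t i)) = 0 := by
    intro t
    have hswap := sum_nbr_swap G (fun i j => a i j t * (x t j - x t i))
    have hneg : (∑ i, ∑ j ∈ G.neighborFinset i,
        (fun i j => a i j t * (x t j - x t i)) j i)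
        = -∑ i, ∑ j ∈ G.neighborFinset i, a i j t * (x t j - x t i) := by
      rw [← Finset.sum_neg_distrib]
      refine Finset.sum_congr rfl fun i _ => ?_
      rw [← Finset.sum_neg_distrib]
      refine Finset.sum_congr rfl fun j _ => ?_
      simp only
      rw [ha_symm j i]
      ring
    rw [hneg] at hswap
    linarith
  have hSconst : ∀ t : ℝ, 0 ≤ t → (∑ i, x t i) = ∑ i, x 0 i := by
    intro t ht
    have hScont : ContinuousOn (fun s => ∑ i, x s i) (Set.Icc 0 t) := fun s hs =>
      ((HasDerivAt.fun_sum (fun i (_ : i ∈ (Finset.univ : Finset (Fin n))) =>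
        hdyn i s hs.1)).continuousAt).continuousWithinAt
    have hSderiv : ∀ s ∈ Set.Ico 0 t,
        HasDerivWithinAt (fun u => ∑ i, x u i) 0 (Set.Ici s) s := by
      intro s hs
      have h := HasDerivAt.fun_sum (fun i (_ : i ∈ (Finset.univ : Finset (Fin n))) =>
        hdyn i s hs.1)
      rw [hzero s] at h
      exact h.hasDerivWithinAt
    exact constant_of_has_deriv_right_zero hScont hSderiv t ⟨ht, le_refl t⟩
  -- derivative of the Lyapunov function
  have hVd : ∀ t : ℝ, 0 ≤ t →
      HasDerivAt (fun s => ∑ i, (x s i - m) ^ 2)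
        (-∑ i, ∑ j ∈ G.neighborFinset i, a i j t * (x t j - x t i) ^ 2) t := by
    intro t ht
    have h1 := HasDerivAt.fun_sum (fun i (_ : i ∈ (Finset.univ : Finset (Fin n))) =>
      ((hdyn i t ht).sub_const m).fun_pow 2)
    refine h1.congr_deriv ?_
    have hexpand : (∑ i, (2 : ℕ) * (x t i - m) ^ (2 - 1) *
        (∑ j ∈ G.neighborFinset i, a i j t * (x t j - x t i)))
        = ∑ i, ∑ j ∈ G.neighborFinset i,
            2 * (x t i - m) * (a i j t * (x t j - x t i)) := by
      refine Finset.sum_congr rfl fun i _ => ?_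
      rw [Finset.mul_sum]
      refine Finset.sum_congr rfl fun j _ => ?_
      push_cast
      ring
    have hswap := sum_nbr_swap G
      (fun i j => 2 * (x t i - m) * (a i j t * (x t j - x t i)))
    have hcomb : (∑ i, ∑ j ∈ G.neighborFinset i,
          2 * (x t i - m) * (a i j t * (x t j - x t i)))
        + (∑ i, ∑ j ∈ G.neighborFinset i,
          2 * (x t j - m) * (a j i t * (x t i - x t j)))
        = ∑ i, ∑ j ∈ G.neighborFinset i,
            (2 * (x t i - m) * (a i j t * (x t j - x t i))
              + 2 * (x t j - m) * (a j i t * (x t i - x t j))) := by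
      rw [← Finset.sum_add_distrib]
      exact Finset.sum_congr rfl fun i _ => (Finset.sum_add_distrib).symm
    have hkey : (∑ i, ∑ j ∈ G.neighborFinset i,
          (2 * (x t i - m) * (a i j t * (x t j - x t i))
            + 2 * (x t j - m) * (a j i t * (x t i - x t j))))
        = ∑ i, ∑ j ∈ G.neighborFinset i,
            (-2) * (a i j t * (x t j - x t i) ^ 2) := by
      refine Finset.sum_congr rfl fun i _ => Finset.sum_congr rfl fun j _ => ?_
      rw [ha_symm j i]
      ring
    have hfactor : (∑ i, ∑ j ∈ G.neighborFinset i,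
          (-2) * (a i j t * (x t j - x t i) ^ 2))
        = (-2) * ∑ i, ∑ j ∈ G.neighborFinset i, a i j t * (x t j - x t i) ^ 2 := by
      rw [Finset.mul_sum]
      exact Finset.sum_congr rfl fun i _ => (Finset.mul_sum _ _ _).symm
    rw [hexpand]
    linarith [hcomb, hswap, hkey, hfactor]
  -- dissipation bound
  have hEnonneg : ∀ t : ℝ,
      (0 : ℝ) ≤ ∑ i, ∑ j ∈ G.neighborFinset i, (x t j - x t i) ^ 2 :=
    fun t => Finset.sum_nonneg fun i _ => Finset.sum_nonneg fun j _ => sq_nonneg _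
  have hVnonneg : ∀ t : ℝ, (0 : ℝ) ≤ ∑ i, (x t i - m) ^ 2 :=
    fun t => Finset.sum_nonneg fun i _ => sq_nonneg _
  have hbound' : ∀ t : ℝ, 0 ≤ t →
      (-∑ i, ∑ j ∈ G.neighborFinset i, a i j t * (x t j - x t i) ^ 2)
        ≤ K * (∑ i, (x t i - m) ^ 2) + 0 := by
    intro t ht
    have hterm : δ * (∑ i, ∑ j ∈ G.neighborFinset i, (x t j - x t i) ^ 2)
        ≤ ∑ i, ∑ j ∈ G.neighborFinset i, a i j t * (x t j - x t i) ^ 2 := by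
      rw [Finset.mul_sum]
      refine Finset.sum_le_sum fun i _ => ?_
      rw [Finset.mul_sum]
      refine Finset.sum_le_sum fun j hj => ?_
      have hadj : G.Adj i j := (SimpleGraph.mem_neighborFinset G i j).1 hj
      exact mul_le_mul_of_nonneg_right (hbound i j hadj t ht).1 (sq_nonneg _)
    have hmt : (∑ j, x t j) / (n : ℝ) = m := by
      rw [hSconst t ht, hm]
      field_simp
    have hpoin := poincare G hn hconn (x t)
    rw [hmt] at hpoin
    rw [← hC] at hpoin
    have h1 : δ * (∑ i, (x t i - m) ^ 2)
        ≤ δ * (C * ∑ i, ∑ j ∈ G.neighborFinset i, (x t j - x t i) ^ 2) :=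
      mul_le_mul_of_nonneg_left hpoin hδ.le
    have h2 : δ / C * (∑ i, (x t i - m) ^ 2)
        ≤ δ * ∑ i, ∑ j ∈ G.neighborFinset i, (x t j - x t i) ^ 2 := by
      rw [div_mul_eq_mul_div, div_le_iff₀ hCpos]
      nlinarith [h1]
    rw [hK, add_zero, neg_mul]
    have h3 := h2.trans hterm
    linarith
  -- Gronwall estimate
  have hVle : ∀ t : ℝ, 0 ≤ t →
      (∑ i, (x t i - m) ^ 2) ≤ (∑ i, (x 0 i - m) ^ 2) * Real.exp (K * t) := by
    intro t ht
    have hcont : ContinuousOn (fun s => ∑ i, (x s i - m) ^ 2) (Set.Icc 0 t) :=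
      fun s hs => ((hVd s hs.1).continuousAt).continuousWithinAt
    have happ := le_gronwallBound_of_liminf_deriv_right_le
      (f := fun s => ∑ i, (x s i - m) ^ 2)
      (f' := fun s => -∑ i, ∑ j ∈ G.neighborFinset i, a i j s * (x s j - x s i) ^ 2)
      (δ := ∑ i, (x 0 i - m) ^ 2) (K := K) (ε := 0) (a := 0) (b := t)
      hcont
      (fun s hs r hr => by
        have hfreq := ((hVd s hs.1).hasDerivWithinAt).liminf_right_slope_le hr
        refine hfreq.mono fun z hz => ?_
        rwa [slope_def_field, div_eq_inv_mul] at hz)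
      le_rfl
      (fun s hs => hbound' s hs.1)
    have h := happ t ⟨ht, le_refl t⟩
    rwa [sub_zero, gronwallBound_ε0] at h
  -- limits
  have h1 : Tendsto (fun t : ℝ => K * t) atTop atBot :=
    (tendsto_const_mul_atBot_of_neg hKneg).2 tendsto_id
  have h2 : Tendsto (fun t : ℝ => Real.exp (K * t)) atTop (𝓝 0) :=
    Real.tendsto_exp_atBot.comp h1
  have hup : Tendsto (fun t : ℝ => (∑ i, (x 0 i - m) ^ 2) * Real.exp (K * t))
      atTop (𝓝 0) := by
    have h3 := h2.const_mul (∑ i, (x 0 i - m) ^ 2)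
    simpa using h3
  have hVtend : Tendsto (fun t : ℝ => ∑ i, (x t i - m) ^ 2) atTop (𝓝 0) := by
    refine tendsto_of_tendsto_of_tendsto_of_le_of_le' tendsto_const_nhds hup ?_ ?_
    · exact Eventually.of_forall fun t => hVnonneg t
    · filter_upwards [eventually_ge_atTop (0 : ℝ)] with t ht using hVle t ht
  intro i
  have hsq : Tendsto (fun t => (x t i - m) ^ 2) atTop (𝓝 0) := by
    refine tendsto_of_tendsto_of_tendsto_of_le_of_le tendsto_const_nhds hVtend ?_ ?_
    · exact fun t => sq_nonneg _
    · exact fun t => Finset.single_le_sum (f := fun k => (x t k - m) ^ 2)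
        (fun k _ => sq_nonneg _) (Finset.mem_univ i)
  have habs : Tendsto (fun t => |x t i - m|) atTop (𝓝 0) := by
    have hsqrt : Tendsto (fun t => Real.sqrt ((x t i - m) ^ 2)) atTop
        (𝓝 (Real.sqrt 0)) := (Real.continuous_sqrt.continuousAt).tendsto.comp hsq
    rw [Real.sqrt_zero] at hsqrt
    exact hsqrt.congr fun t => Real.sqrt_sq_eq_abs _
  rw [tendsto_iff_dist_tendsto_zero]
  exact habs.congr fun t => (Real.dist_eq _ _).symm
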